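/- Let v: V \ {0} → I be a prevaluation with one-dimensional leaves on a vector space V over a field k, and let W ⊆ V be a nonzero finite-dimensional subspace. Then the cardinality of v(W \ {0}) equals dim_k W. -/

import Mathlib

variable {k V I : Type*} [Field k] [AddCommGroup V] [Module k V] [LinearOrder I]

section Helpers


variable (v : V → I)
    (hadd : ∀ f g : V, f ≠ 0 → g ≠ 0 → f + g ≠ 0 → min (v f) (v g) ≤ v (f + g))
    (hsmul : ∀ (c : k) (f : V), c ≠ 0 → f ≠ 0 → v (c • f) = v f)

omit [LinearOrder I] in
include hsmul in
lemma aux_vneg (g : V) (hg : g ≠ 0) : v (-g) = v g := by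
  rw [← neg_one_smul k g]
  exact hsmul (-1) g (by norm_num) hg

include hadd hsmul in
lemma aux_add_lt (f g : V) (hf : f ≠ 0) (hg : g ≠ 0) (hlt : v f < v g) :
    f + g ≠ 0 ∧ v (f + g) = v f := by
  have hne : f + g ≠ 0 := by
    intro h
    have : g = -f := by
      rw [eq_neg_iff_add_eq_zero, add_comm]; exact h
    rw [this, aux_vneg v hsmul f hf] at hlt
    exact lt_irrefl _ hlt
  refine ⟨hne, le_antisymm ?_ ?_⟩
  · have h2 := hadd (f + g) (-g) hne (neg_ne_zero.2 hg) (by simpa using hf)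
    rw [add_neg_cancel_right, aux_vneg v hsmul g hg] at h2
    rcases min_le_iff.mp h2 with h | h
    · exact h
    · exact absurd h (not_le.2 hlt)
  · have h1 := hadd f g hf hg hne
    rwa [min_eq_left hlt.le] at h1

include hadd hsmul in
lemma aux_add_ne (f g : V) (hf : f ≠ 0) (hg : g ≠ 0) (hne : v f ≠ v g) :
    f + g ≠ 0 ∧ v (f + g) = min (v f) (v g) := by
  rcases hne.lt_or_gt with h | h
  · have := aux_add_lt v hadd hsmul f g hf hg h
    rw [min_eq_left h.le]; exact this
  · have := aux_add_lt v hadd hsmul g f hg hf h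
    rw [min_eq_right h.le, add_comm]; exact this

include hadd hsmul in
lemma aux_sum {ι : Type*} (s : Finset ι) (g : ι → V)
    (h0 : ∀ i ∈ s, g i ≠ 0)
    (hinj : ∀ i ∈ s, ∀ j ∈ s, v (g i) = v (g j) → i = j)
    (hne : s.Nonempty) :
    (∑ i ∈ s, g i) ≠ 0 ∧
      ∃ i ∈ s, v (∑ i ∈ s, g i) = v (g i) ∧ ∀ j ∈ s, v (g i) ≤ v (g j) := by
  classical
  induction s using Finset.cons_induction with
  | empty => exact absurd hne (by simp)
  | cons a t ha ih =>
    rw [Finset.sum_cons]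
    rcases t.eq_empty_or_nonempty with rfl | htne
    · simp only [Finset.sum_empty, add_zero]
      exact ⟨h0 a (Finset.mem_cons_self a _), a, Finset.mem_cons_self a _, rfl,
        by rintro j hj; rcases Finset.mem_cons.mp hj with rfl | hj
           · exact le_rfl
           · simp at hj⟩
    · obtain ⟨hs0, i, hit, hvi, hmin⟩ := ih
        (fun i hi => h0 i (Finset.mem_cons_of_mem hi))
        (fun i hi j hj hv => hinj i (Finset.mem_cons_of_mem hi) j (Finset.mem_cons_of_mem hj) hv)
        htne
      have ha0 : g a ≠ 0 := h0 a (Finset.mem_cons_self a _)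
      have hvne : v (g a) ≠ v (∑ j ∈ t, g j) := by
        rw [hvi]
        intro h
        exact ha (hinj a (Finset.mem_cons_self a _) i (Finset.mem_cons_of_mem hit) h ▸ hit)
      obtain ⟨hsum0, hsumv⟩ := aux_add_ne v hadd hsmul (g a) (∑ j ∈ t, g j) ha0 hs0 hvne
      refine ⟨hsum0, ?_⟩
      rcases le_total (v (g a)) (v (g i)) with hle | hle
      · refine ⟨a, Finset.mem_cons_self a _, ?_, ?_⟩
        · rw [hsumv, hvi, min_eq_left hle]
        · rintro j hj
          rcases Finset.mem_cons.mp hj with rfl | hj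
          · exact le_rfl
          · exact hle.trans (hmin j hj)
      · refine ⟨i, Finset.mem_cons_of_mem hit, ?_, ?_⟩
        · rw [hsumv, hvi, min_eq_right hle]
        · rintro j hj
          rcases Finset.mem_cons.mp hj with rfl | hj
          · exact hle
          · exact hmin j hj

include hadd hsmul in
lemma aux_indep {ι : Type*} (f : ι → V) (h0 : ∀ i, f i ≠ 0)
    (hinj : Function.Injective (fun i => v (f i))) :
    LinearIndependent k f := by
  classical
  rw [linearIndependent_iff']
  intro s c hsum i his
  by_contra hci
  set t := s.filter (fun j => c j ≠ 0) with ht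
  have htne : t.Nonempty := ⟨i, Finset.mem_filter.2 ⟨his, hci⟩⟩
  have hstep : ∑ j ∈ t, c j • f j = 0 := by
    rw [← hsum]
    apply Finset.sum_subset (Finset.filter_subset _ _)
    intro x hx hxt
    have hcx : c x = 0 := by simpa [ht, hx] using hxt
    rw [hcx, zero_smul]
  have := aux_sum v hadd hsmul t (fun j => c j • f j)
    (fun j hj => smul_ne_zero (Finset.mem_filter.mp hj).2 (h0 j))
    (fun j hj j' hj' hv => by
      apply hinj
      rwa [hsmul _ _ (Finset.mem_filter.mp hj).2 (h0 j),
        hsmul _ _ (Finset.mem_filter.mp hj').2 (h0 j')] at hv)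
    htne
  exact this.1 hstep

end Helpers

/-- For a prevaluation `v` on `V`, the subspace `V_α = {f | f = 0 ∨ v f ≥ α}`. -/
def levelSubmodule (v : V → I)
    (hadd : ∀ f g : V, f ≠ 0 → g ≠ 0 → f + g ≠ 0 → min (v f) (v g) ≤ v (f + g))
    (hsmul : ∀ (c : k) (f : V), c ≠ 0 → f ≠ 0 → v (c • f) = v f)
    (α : I) : Submodule k V where
  carrier := {f | f = 0 ∨ α ≤ v f}
  zero_mem' := Or.inl rfl
  add_mem' := by
    intro a b ha hb
    simp only [Set.mem_setOf_eq] at *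
    rcases ha with rfl | ha
    · simpa using hb
    rcases hb with rfl | hb
    · simpa using Or.inr ha
    by_cases ha0 : a = 0
    · subst ha0; simpa using Or.inr hb
    by_cases hb0 : b = 0
    · subst hb0; simpa using Or.inr ha
    by_cases hab : a + b = 0
    · exact Or.inl hab
    · exact Or.inr (le_trans (le_min ha hb) (hadd a b ha0 hb0 hab))
  smul_mem' := by
    intro c f hf
    simp only [Set.mem_setOf_eq] at *
    rcases hf with rfl | hf
    · exact Or.inl (smul_zero c)
    by_cases hc : c = 0
    · subst hc; exact Or.inl (zero_smul k f)
    by_cases hf0 : f = 0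
    · subst hf0; exact Or.inl (smul_zero c)
    · exact Or.inr (by rw [hsmul c f hc hf0]; exact hf)


lemma aux_mem_levelSubmodule {v : V → I}
    {hadd : ∀ f g : V, f ≠ 0 → g ≠ 0 → f + g ≠ 0 → min (v f) (v g) ≤ v (f + g)}
    {hsmul : ∀ (c : k) (f : V), c ≠ 0 → f ≠ 0 → v (c • f) = v f}
    {α : I} {x : V} :
    x ∈ levelSubmodule v hadd hsmul α ↔ x = 0 ∨ α ≤ v x := Iff.rfl

/-- The leaf of a prevaluation above `α`: the quotient `V_α / ⋃_{β > α} V_β`. -/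
abbrev leafQuot (v : V → I)
    (hadd : ∀ f g : V, f ≠ 0 → g ≠ 0 → f + g ≠ 0 → min (v f) (v g) ≤ v (f + g))
    (hsmul : ∀ (c : k) (f : V), c ≠ 0 → f ≠ 0 → v (c • f) = v f)
    (α : I) :=
  (levelSubmodule v hadd hsmul α) ⧸
    ((⨆ β ∈ {β : I | α < β}, levelSubmodule v hadd hsmul β).comap
      (levelSubmodule v hadd hsmul α).subtype)

/-- if `v` is a prevaluation with one-dimensional leaves on `V` and `W ⊆ V`
is a nonzero finite-dimensional subspace, then the number of values of `v` on `W \ {0}`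
equals `dim W`. -/
theorem stmt7 (v : V → I)
    (hadd : ∀ f g : V, f ≠ 0 → g ≠ 0 → f + g ≠ 0 → min (v f) (v g) ≤ v (f + g))
    (hsmul : ∀ (c : k) (f : V), c ≠ 0 → f ≠ 0 → v (c • f) = v f)
    (hleaf : ∀ α : I, Module.rank k (leafQuot v hadd hsmul α) ≤ 1)
    (W : Submodule k V) (hW : W ≠ ⊥) [FiniteDimensional k W] :
    Nat.card (v '' {f : V | f ∈ W ∧ f ≠ 0}) = Module.finrank k W := by
  classical
  set S : Set I := v '' {f : V | f ∈ W ∧ f ≠ 0} with hS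
  have hrep : ∀ s : S, ∃ f : V, f ∈ W ∧ f ≠ 0 ∧ v f = (s : I) := by
    rintro ⟨s, hs⟩
    obtain ⟨f, ⟨hfW, hf0⟩, hvf⟩ := hs
    exact ⟨f, hfW, hf0, hvf⟩
  choose r hrW hr0 hrv using hrep
  have hindep : LinearIndependent k r :=
    aux_indep v hadd hsmul r hr0 (fun s t h => by
      apply Subtype.ext
      rw [← hrv s, ← hrv t]
      exact h)
  let r' : S → W := fun s => ⟨r s, hrW s⟩
  have hindep' : LinearIndependent k r' := by
    apply LinearIndependent.of_comp W.subtype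
    exact hindep
  have hfin : Finite S := hindep'.finite_of_isNoetherian
  have hSfin : S.Finite := @Set.toFinite _ _ hfin
  set P : Submodule k V := Submodule.span k (Set.range (fun s : S => r s)) with hP
  have hrP : ∀ s : S, r s ∈ P := fun s => Submodule.subset_span ⟨s, rfl⟩
  have hPW : P ≤ W := Submodule.span_le.2 (by rintro _ ⟨s, rfl⟩; exact hrW s)
  have hWP : W ≤ P := by
    by_contra hcon
    obtain ⟨g0, hg0W, hg0P⟩ := SetLike.not_le_iff_exists.mp hcon
    set T : Set V := {x : V | x ∈ W ∧ x ∉ P} with hT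
    have hTne : T.Nonempty := ⟨g0, hg0W, hg0P⟩
    have hTS : v '' T ⊆ S := by
      rintro _ ⟨x, ⟨hxW, hxP⟩, rfl⟩
      exact ⟨x, ⟨hxW, fun h => hxP (by rw [h]; exact P.zero_mem)⟩, rfl⟩
    have hvTfin : (v '' T).Finite := hSfin.subset hTS
    obtain ⟨α, hαT, hαmax⟩ : ∃ α ∈ v '' T, ∀ β ∈ v '' T, β ≤ α := by
      obtain ⟨a, ha, hmax⟩ := Set.exists_max_image (v '' T) id hvTfin (hTne.image v)
      exact ⟨a, ha, hmax⟩
    obtain ⟨g, ⟨hgW, hgP⟩, hgv⟩ := hαT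
    have hg0 : g ≠ 0 := fun h => hgP (by rw [h]; exact P.zero_mem)
    have hαS : α ∈ S := ⟨g, ⟨hgW, hg0⟩, hgv⟩
    set f : V := r ⟨α, hαS⟩ with hf
    have hfv : v f = α := hrv _
    have hf0 : f ≠ 0 := hr0 _
    have hfP : f ∈ P := hrP _
    have hfW : f ∈ W := hrW _
    set Vα : Submodule k V := levelSubmodule v hadd hsmul α with hVα
    set N : Submodule k V := ⨆ β ∈ {β : I | α < β}, levelSubmodule v hadd hsmul β with hN
    have hmemN : ∀ x : V, x ∈ N → x = 0 ∨ α < v x := by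
      intro x hx
      rw [hN, ← iSup_subtype''] at hx
      rcases isEmpty_or_nonempty {β : I | α < β} with hemp | hne2
      · rw [iSup_of_empty] at hx
        exact Or.inl ((Submodule.mem_bot k).mp hx)
      · have hdir : Directed (· ≤ ·)
            (fun β : {β : I | α < β} => levelSubmodule v hadd hsmul (β : I)) := by
          rintro ⟨β₁, h₁⟩ ⟨β₂, h₂⟩
          refine ⟨⟨min β₁ β₂, lt_min h₁ h₂⟩, ?_, ?_⟩
          · intro y hy
            rcases (aux_mem_levelSubmodule (hadd := hadd) (hsmul := hsmul)).mp hy with rfl | hy'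
            · exact (aux_mem_levelSubmodule (hadd := hadd) (hsmul := hsmul)).mpr (Or.inl rfl)
            · exact (aux_mem_levelSubmodule (hadd := hadd) (hsmul := hsmul)).mpr
                (Or.inr (le_trans (min_le_left _ _) hy'))
          · intro y hy
            rcases (aux_mem_levelSubmodule (hadd := hadd) (hsmul := hsmul)).mp hy with rfl | hy'
            · exact (aux_mem_levelSubmodule (hadd := hadd) (hsmul := hsmul)).mpr (Or.inl rfl)
            · exact (aux_mem_levelSubmodule (hadd := hadd) (hsmul := hsmul)).mpr
                (Or.inr (le_trans (min_le_right _ _) hy'))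
        rw [Submodule.mem_iSup_of_directed _ hdir] at hx
        obtain ⟨⟨β, hβ⟩, hxβ⟩ := hx
        rcases (aux_mem_levelSubmodule (hadd := hadd) (hsmul := hsmul)).mp hxβ with rfl | h
        · exact Or.inl rfl
        · exact Or.inr (lt_of_lt_of_le hβ h)
    set Q : Submodule k Vα := N.comap Vα.subtype with hQ
    have hmk : ∀ x : Vα, (x : V) ≠ 0 → v (x : V) = α → Q.mkQ x ≠ 0 := by
      intro x hx0 hxv h
      rw [Submodule.mkQ_apply, Submodule.Quotient.mk_eq_zero] at h
      rcases hmemN (x : V) (Submodule.mem_comap.mp h) with h0 | hlt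
      · exact hx0 h0
      · rw [hxv] at hlt
        exact lt_irrefl _ hlt
    have hgα : g ∈ Vα := (aux_mem_levelSubmodule (hadd := hadd) (hsmul := hsmul)).mpr (Or.inr (le_of_eq hgv.symm))
    have hfα : f ∈ Vα := (aux_mem_levelSubmodule (hadd := hadd) (hsmul := hsmul)).mpr (Or.inr (le_of_eq hfv.symm))
    set xg : Vα := ⟨g, hgα⟩ with hxgdef
    set xf : Vα := ⟨f, hfα⟩ with hxfdef
    have hxg : Q.mkQ xg ≠ 0 := hmk xg hg0 hgv
    have hxf : Q.mkQ xf ≠ 0 := hmk xf hf0 hfv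
    obtain ⟨v₀, hv₀⟩ := rank_le_one_iff.mp (hleaf α)
    obtain ⟨a, ha⟩ := hv₀ (Q.mkQ xg)
    obtain ⟨b, hb⟩ := hv₀ (Q.mkQ xf)
    have hb0 : b ≠ 0 := by
      rintro rfl
      rw [zero_smul] at hb
      exact hxf hb.symm
    set c : k := a * b⁻¹ with hc
    have hgc : Q.mkQ xg = c • Q.mkQ xf := by
      rw [← ha, ← hb, smul_smul, hc, mul_assoc, inv_mul_cancel₀ hb0, mul_one]
    have hc0 : c ≠ 0 := by
      rintro h
      rw [h, zero_smul] at hgc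
      exact hxg hgc
    have hsub : xg - c • xf ∈ Q := by
      rw [← Submodule.Quotient.mk_eq_zero, ← Submodule.mkQ_apply, map_sub, map_smul, hgc, sub_self]
    have hsubN : g - c • f ∈ N := Submodule.mem_comap.mp hsub
    rcases hmemN _ hsubN with h0 | hlt
    · exact hgP (sub_eq_zero.mp h0 ▸ P.smul_mem c hfP)
    · have hg'W : g - c • f ∈ W := sub_mem hgW (W.smul_mem c hfW)
      have hg'P : g - c • f ∉ P := by
        intro h
        apply hgP
        have hgeq : g = (g - c • f) + c • f := by abel
        rw [hgeq]
        exact P.add_mem h (P.smul_mem c hfP)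
      have hmem : v (g - c • f) ∈ v '' T := ⟨_, ⟨hg'W, hg'P⟩, rfl⟩
      exact absurd (hαmax _ hmem) (not_le.2 hlt)
  have hPeq : P = W := le_antisymm hPW hWP
  have hspan : Submodule.span k (Set.range r') = ⊤ := by
    apply Submodule.map_injective_of_injective W.injective_subtype
    rw [Submodule.map_span, ← Set.range_comp]
    have hcomp : (W.subtype ∘ r') = fun s : S => r s := rfl
    rw [hcomp, Submodule.map_top, Submodule.range_subtype, ← hP, hPeq]
  haveI := hfin
  haveI : Fintype S := Fintype.ofFinite _
  let B : Module.Basis S k W := Module.Basis.mk hindep' hspan.ge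
  rw [Module.finrank_eq_card_basis B, Nat.card_eq_fintype_card]
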